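/- arXiv:1806.05517 — 3 statements merged into one kernel-verified Lean document; each statement's English description precedes it below -/
import Mathlib

section
/- Let B = [B̲, B̄] ⊂ ℝ be an interval, let 0 < γ < 1/2, τ > 1, and let Q ∈ ℕ satisfy 2/Q ≤ B̄ − B̲. Set Θ = B ∩ D(γ,τ). Then Leb(Θ) ≥ Leb(B)·(1 − 4γ/((τ−1)Q^{τ−1})) − Σ_{q=1}^{Q} Σ_{p=⌊B̲q⌋, gcd(p,q)=1}^{⌈B̄q⌉} Δ(p,q), where Δ(p,q) = max(p/q + γ/q^{τ+1} − B̲, 0) if p = ⌊B̲q⌋; Δ(p,q) = max(B̄ − p/q + γ/q^{τ+1}, 0) if p = ⌈B̄q⌉; and Δ(p,q) = min(B̄, p/q + γ/q^{τ+1}) − max(B̲, p/q − γ/q^{τ+1}) otherwise. -/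
set_option maxHeartbeats 1000000

open MeasureTheory
open scoped ENNReal

noncomputable section

/-- `θ` is a `(γ,τ)`-Diophantine number. -/
def IsDioph (γ τ θ : ℝ) : Prop :=
  ∀ p q : ℤ, q ≠ 0 → γ * |(q : ℝ)| ^ (-τ) ≤ |(q : ℝ) * θ - (p : ℝ)|

/-- The quantity `Δ(p,q)` measuring the part of the `(p,q)`-resonance inside `[B̲,B̄]`. -/
def DeltaPQ (Bl Bu γ τ : ℝ) (p : ℤ) (q : ℕ) : ℝ :=
  if p = ⌊Bl * (q : ℝ)⌋ then
    max ((p : ℝ) / (q : ℝ) + γ / (q : ℝ) ^ (τ + 1) - Bl) 0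
  else if p = ⌈Bu * (q : ℝ)⌉ then
    max (Bu - (p : ℝ) / (q : ℝ) + γ / (q : ℝ) ^ (τ + 1)) 0
  else
    min Bu ((p : ℝ) / (q : ℝ) + γ / (q : ℝ) ^ (τ + 1))
      - max Bl ((p : ℝ) / (q : ℝ) - γ / (q : ℝ) ^ (τ + 1))

lemma tele_step {τ : ℝ} (hτ : 1 < τ) {x : ℝ} (hx : 1 ≤ x) :
    (τ - 1) * (x + 1) ^ (-τ) ≤ x ^ (1 - τ) - (x + 1) ^ (1 - τ) := by
  have hx0 : 0 < x := lt_of_lt_of_le zero_lt_one hx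
  have hcont : ContinuousOn (fun t : ℝ => t ^ (1 - τ)) (Set.Icc x (x + 1)) := by
    apply ContinuousOn.rpow_const continuousOn_id
    intro t ht
    exact Or.inl (ne_of_gt (lt_of_lt_of_le hx0 ht.1))
  have hderiv : ∀ t ∈ Set.Ioo x (x + 1),
      HasDerivAt (fun t : ℝ => t ^ (1 - τ)) ((1 - τ) * t ^ (1 - τ - 1)) t := by
    intro t ht
    exact Real.hasDerivAt_rpow_const (Or.inl (ne_of_gt (lt_trans hx0 ht.1)))
  obtain ⟨c, hc, hceq⟩ := exists_hasDerivAt_eq_slope _ _ (by linarith : x < x + 1) hcont hderiv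
  have hc0 : 0 < c := lt_trans hx0 hc.1
  have : (1 - τ) * c ^ (1 - τ - 1) = (x + 1) ^ (1 - τ) - x ^ (1 - τ) := by
    rw [hceq]; ring_nf
  have hcb : (x + 1) ^ (-τ) ≤ c ^ (-τ) :=
    Real.rpow_le_rpow_of_nonpos hc0 (le_of_lt hc.2) (by linarith)
  rw [show (1:ℝ) - τ - 1 = -τ by ring] at this
  nlinarith [this, hcb]

lemma tail_sum {τ : ℝ} (hτ : 1 < τ) {Q : ℕ} (hQ : 1 ≤ Q) :
    ∑' n : ℕ, ((n + (Q + 1) : ℕ) : ℝ) ^ (-τ) ≤ (Q : ℝ) ^ (1 - τ) / (τ - 1) := by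
  set g : ℕ → ℝ := fun n => ((n + Q : ℕ) : ℝ) ^ (1 - τ) / (τ - 1) with hg
  have hτ0 : (0:ℝ) < τ - 1 := by linarith
  have hstep : ∀ n : ℕ, ((n + (Q + 1) : ℕ) : ℝ) ^ (-τ) ≤ g n - g (n + 1) := by
    intro n
    have hx : (1:ℝ) ≤ ((n + Q : ℕ) : ℝ) := by
      have : 1 ≤ n + Q := le_add_of_nonneg_of_le (Nat.zero_le n) hQ
      exact_mod_cast this
    have h := tele_step hτ hx
    have e1 : ((n + (Q + 1) : ℕ) : ℝ) = ((n + Q : ℕ) : ℝ) + 1 := by push_cast; ring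
    have e2 : ((n + 1 + Q : ℕ) : ℝ) = ((n + Q : ℕ) : ℝ) + 1 := by push_cast; ring
    rw [hg]; simp only [e2]
    rw [e1]
    rw [div_sub_div_same, le_div_iff₀ hτ0]
    linarith
  have hgnn : ∀ n : ℕ, 0 ≤ g n := fun n =>
    div_nonneg (Real.rpow_nonneg (Nat.cast_nonneg _) _) (le_of_lt hτ0)
  have hsum : ∀ N : ℕ, ∑ n ∈ Finset.range N, ((n + (Q + 1) : ℕ) : ℝ) ^ (-τ) ≤
      (Q : ℝ) ^ (1 - τ) / (τ - 1) := by
    intro N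
    have : ∑ n ∈ Finset.range N, ((n + (Q + 1) : ℕ) : ℝ) ^ (-τ) ≤
        ∑ n ∈ Finset.range N, (g n - g (n + 1)) :=
      Finset.sum_le_sum fun n _ => hstep n
    rw [Finset.sum_range_sub' g N] at this
    calc ∑ n ∈ Finset.range N, ((n + (Q + 1) : ℕ) : ℝ) ^ (-τ)
        ≤ g 0 - g N := by assumption
      _ ≤ g 0 := by linarith [hgnn N]
      _ = (Q : ℝ) ^ (1 - τ) / (τ - 1) := by rw [hg]; simp
  have hs : Summable (fun n : ℕ => ((n + (Q + 1) : ℕ) : ℝ) ^ (-τ)) := by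
    have h0 : Summable (fun n : ℕ => (n : ℝ) ^ (-τ)) :=
      Real.summable_nat_rpow.mpr (by linarith)
    exact (summable_nat_add_iff (Q + 1)).mpr h0
  exact Summable.tsum_le_of_sum_range_le hs hsum

lemma measurable_dioph (γ τ : ℝ) : MeasurableSet {θ : ℝ | IsDioph γ τ θ} := by
  have : {θ : ℝ | IsDioph γ τ θ} =
      ⋂ (p : ℤ) (q : ℤ), {θ : ℝ | q ≠ 0 → γ * |(q : ℝ)| ^ (-τ) ≤ |(q : ℝ) * θ - (p : ℝ)|} := by
    ext θ; simp [IsDioph, Set.mem_iInter]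
  rw [this]
  refine MeasurableSet.iInter fun p => MeasurableSet.iInter fun q => ?_
  by_cases hq : q = 0
  · simp [hq]
  · have : {θ : ℝ | q ≠ 0 → γ * |(q : ℝ)| ^ (-τ) ≤ |(q : ℝ) * θ - (p : ℝ)|} =
        {θ : ℝ | γ * |(q : ℝ)| ^ (-τ) ≤ |(q : ℝ) * θ - (p : ℝ)|} := by
      ext θ; simp [hq]
    rw [this]
    exact measurableSet_le measurable_const
      (((measurable_id.const_mul ((q:ℝ))).sub measurable_const).abs)

/-- The candidate numerators for denominator `q`. -/
def numSet (Bl Bu : ℝ) (q : ℕ) : Finset ℤ :=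
  (Finset.Icc ⌈Bl * (q : ℝ) - 1/2⌉ ⌊Bu * (q : ℝ) + 1/2⌋).filter
    (fun p => Int.gcd p (q : ℤ) = 1)

/-- The resonance set for denominator `q`, intersected with the interval. -/
def resSet (Bl Bu γ τ : ℝ) (q : ℕ) : Set ℝ :=
  ⋃ p ∈ numSet Bl Bu q,
    Set.Icc Bl Bu ∩
      Set.Ioo ((p : ℝ) / q - γ / (q : ℝ) ^ (τ + 1)) ((p : ℝ) / q + γ / (q : ℝ) ^ (τ + 1))

lemma numSet_subset (Bl Bu : ℝ) (q : ℕ) :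
    numSet Bl Bu q ⊆ (Finset.Icc ⌊Bl * (q : ℝ)⌋ ⌈Bu * (q : ℝ)⌉).filter
      (fun p => Int.gcd p (q : ℤ) = 1) := by
  apply Finset.filter_subset_filter
  apply Finset.Icc_subset_Icc
  · have h1 := Int.floor_le (Bl * (q:ℝ))
    have h2 := Int.le_ceil (Bl * (q:ℝ) - 1/2)
    have h : ((⌊Bl * (q:ℝ)⌋ : ℤ) : ℝ) < ((⌈Bl * (q:ℝ) - 1/2⌉ : ℤ) : ℝ) + 1 := by linarith
    exact Int.lt_add_one_iff.mp (by exact_mod_cast h)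
  · have h1 := Int.floor_le (Bu * (q:ℝ) + 1/2)
    have h2 := Int.le_ceil (Bu * (q:ℝ))
    have h : ((⌊Bu * (q:ℝ) + 1/2⌋ : ℤ) : ℝ) < ((⌈Bu * (q:ℝ)⌉ : ℤ) : ℝ) + 1 := by linarith
    exact Int.lt_add_one_iff.mp (by exact_mod_cast h)

lemma delta_nonneg {Bl Bu γ τ : ℝ} (hγ0 : 0 < γ) {q : ℕ} (hq : 1 ≤ q) {p : ℤ}
    (hp : p ∈ Finset.Icc ⌊Bl * (q : ℝ)⌋ ⌈Bu * (q : ℝ)⌉) : 0 ≤ DeltaPQ Bl Bu γ τ p q := by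
  rw [Finset.mem_Icc] at hp
  have hqR : (0:ℝ) < (q : ℝ) := by exact_mod_cast hq
  have hr : 0 ≤ γ / (q : ℝ) ^ (τ + 1) := by positivity
  rw [DeltaPQ]; split_ifs with h1 h2
  · exact le_max_right _ _
  · exact le_max_right _ _
  · have hlow : Bl ≤ (p : ℝ) / (q : ℝ) := by
      have hp1 : ⌊Bl * (q:ℝ)⌋ + 1 ≤ p := by omega
      have hp1' : ((⌊Bl * (q:ℝ)⌋ : ℤ) : ℝ) + 1 ≤ (p : ℝ) := by exact_mod_cast hp1
      have h3 : Bl * (q:ℝ) < (p : ℝ) := by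
        have := Int.lt_floor_add_one (Bl * (q:ℝ)); linarith
      exact le_of_lt ((lt_div_iff₀ hqR).2 h3)
    have hhigh : (p : ℝ) / (q : ℝ) ≤ Bu := by
      have hp1 : p ≤ ⌈Bu * (q:ℝ)⌉ - 1 := by omega
      have hp1' : (p : ℝ) ≤ ((⌈Bu * (q:ℝ)⌉ : ℤ) : ℝ) - 1 := by exact_mod_cast hp1
      have h3 : (p : ℝ) < Bu * (q:ℝ) := by
        have := Int.ceil_lt_add_one (Bu * (q:ℝ)); linarith
      exact le_of_lt ((div_lt_iff₀ hqR).2 (by linarith))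
    have e1 : max Bl ((p : ℝ) / (q : ℝ) - γ / (q : ℝ) ^ (τ + 1)) ≤ (p : ℝ) / (q : ℝ) :=
      max_le hlow (by linarith)
    have e2 : (p : ℝ) / (q : ℝ) ≤ min Bu ((p : ℝ) / (q : ℝ) + γ / (q : ℝ) ^ (τ + 1)) :=
      le_min hhigh (by linarith)
    linarith

lemma vol_le_delta {Bl Bu γ τ : ℝ} {q : ℕ} (p : ℤ) :
    volume (Set.Icc Bl Bu ∩
        Set.Ioo ((p : ℝ) / q - γ / (q : ℝ) ^ (τ + 1)) ((p : ℝ) / q + γ / (q : ℝ) ^ (τ + 1)))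
      ≤ ENNReal.ofReal (DeltaPQ Bl Bu γ τ p q) := by
  set c := (p : ℝ) / (q : ℝ) with hc
  set r := γ / (q : ℝ) ^ (τ + 1) with hr
  have hsub : Set.Icc Bl Bu ∩ Set.Ioo (c - r) (c + r) ⊆
      Set.Icc (max Bl (c - r)) (min Bu (c + r)) := by
    rintro x ⟨⟨h1, h2⟩, h3, h4⟩
    exact ⟨max_le h1 h3.le, le_min h2 h4.le⟩
  calc volume (Set.Icc Bl Bu ∩ Set.Ioo (c - r) (c + r))
      ≤ volume (Set.Icc (max Bl (c - r)) (min Bu (c + r))) := measure_mono hsub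
    _ = ENNReal.ofReal (min Bu (c + r) - max Bl (c - r)) := Real.volume_Icc
    _ ≤ ENNReal.ofReal (DeltaPQ Bl Bu γ τ p q) := by
        apply ENNReal.ofReal_le_ofReal
        rw [DeltaPQ]
        split_ifs with h1 h2
        · refine le_max_of_le_left ?_
          have := min_le_right Bu (c + r)
          have := le_max_left Bl (c - r)
          linarith
        · refine le_max_of_le_left ?_
          have := min_le_left Bu (c + r)
          have := le_max_right Bl (c - r)
          linarith
        · exact le_refl _

lemma vol_resSet_le {Bl Bu γ τ : ℝ} (hγ0 : 0 < γ) {q : ℕ} (hq : 1 ≤ q)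
    (h2 : 2 ≤ (Bu - Bl) * (q : ℝ)) :
    volume (resSet Bl Bu γ τ q) ≤ ENNReal.ofReal (4 * γ * (Bu - Bl) * (q : ℝ) ^ (-τ)) := by
  have hqR : (0:ℝ) < (q : ℝ) := by exact_mod_cast hq
  set r := γ / (q : ℝ) ^ (τ + 1) with hr
  have hr0 : 0 ≤ r := by rw [hr]; positivity
  have hcard : (((numSet Bl Bu q).card : ℕ) : ℝ) ≤ (Bu - Bl) * (q : ℝ) + 2 := by
    have hc1 : (numSet Bl Bu q).card ≤
        (⌊Bu * (q:ℝ) + 1/2⌋ + 1 - ⌈Bl * (q:ℝ) - 1/2⌉).toNat := by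
      rw [← Int.card_Icc]
      exact Finset.card_le_card (Finset.filter_subset _ _)
    have hf := Int.floor_le (Bu * (q:ℝ) + 1/2)
    have hce := Int.le_ceil (Bl * (q:ℝ) - 1/2)
    calc (((numSet Bl Bu q).card : ℕ) : ℝ)
        ≤ (((⌊Bu * (q:ℝ) + 1/2⌋ + 1 - ⌈Bl * (q:ℝ) - 1/2⌉).toNat : ℕ) : ℝ) := by
          exact_mod_cast hc1
      _ ≤ (Bu - Bl) * (q : ℝ) + 2 := by
          rcases le_or_gt (⌊Bu * (q:ℝ) + 1/2⌋ + 1 - ⌈Bl * (q:ℝ) - 1/2⌉) 0 with h | h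
          · rw [Int.toNat_of_nonpos h]
            push_cast
            linarith
          · have e : (((⌊Bu * (q:ℝ) + 1/2⌋ + 1 - ⌈Bl * (q:ℝ) - 1/2⌉).toNat : ℕ) : ℝ)
                = ((⌊Bu * (q:ℝ) + 1/2⌋ + 1 - ⌈Bl * (q:ℝ) - 1/2⌉ : ℤ) : ℝ) := by
              exact_mod_cast Int.toNat_of_nonneg h.le
            rw [e]
            push_cast
            linarith
  have hbound : ∀ p ∈ numSet Bl Bu q,
      volume (Set.Icc Bl Bu ∩
        Set.Ioo ((p : ℝ) / q - r) ((p : ℝ) / q + r)) ≤ ENNReal.ofReal (2 * r) := by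
    intro p _
    calc volume (Set.Icc Bl Bu ∩ Set.Ioo ((p : ℝ) / q - r) ((p : ℝ) / q + r))
        ≤ volume (Set.Ioo ((p : ℝ) / q - r) ((p : ℝ) / q + r)) :=
          measure_mono Set.inter_subset_right
      _ = ENNReal.ofReal ((p : ℝ) / q + r - ((p : ℝ) / q - r)) := Real.volume_Ioo
      _ = ENNReal.ofReal (2 * r) := by ring_nf
  calc volume (resSet Bl Bu γ τ q)
      ≤ ∑ p ∈ numSet Bl Bu q, volume (Set.Icc Bl Bu ∩
          Set.Ioo ((p : ℝ) / q - r) ((p : ℝ) / q + r)) := measure_biUnion_finset_le _ _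
    _ ≤ ∑ p ∈ numSet Bl Bu q, ENNReal.ofReal (2 * r) := Finset.sum_le_sum hbound
    _ = ((numSet Bl Bu q).card : ℝ≥0∞) * ENNReal.ofReal (2 * r) := by
        rw [Finset.sum_const, nsmul_eq_mul]
    _ = ENNReal.ofReal (((numSet Bl Bu q).card : ℝ) * (2 * r)) := by
        rw [← ENNReal.ofReal_natCast ((numSet Bl Bu q).card),
          ← ENNReal.ofReal_mul (Nat.cast_nonneg _)]
    _ ≤ ENNReal.ofReal (4 * γ * (Bu - Bl) * (q : ℝ) ^ (-τ)) := by
        apply ENNReal.ofReal_le_ofReal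
        have hqτ : (0:ℝ) < (q : ℝ) ^ τ := Real.rpow_pos_of_pos hqR τ
        have e : 2 * ((Bu - Bl) * (q : ℝ)) * (2 * r) = 4 * γ * (Bu - Bl) * (q : ℝ) ^ (-τ) := by
          rw [hr, Real.rpow_neg hqR.le, Real.rpow_add hqR, Real.rpow_one]
          field_simp
          ring
        have hcard2 : (((numSet Bl Bu q).card : ℕ) : ℝ) ≤ 2 * ((Bu - Bl) * (q : ℝ)) := by
          linarith
        calc (((numSet Bl Bu q).card : ℕ) : ℝ) * (2 * r)
            ≤ 2 * ((Bu - Bl) * (q : ℝ)) * (2 * r) := by nlinarith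
          _ = 4 * γ * (Bu - Bl) * (q : ℝ) ^ (-τ) := e

lemma resSet_zero (Bl Bu γ τ : ℝ) : resSet Bl Bu γ τ 0 = ∅ := by
  have h : numSet Bl Bu 0 = ∅ := by
    ext p
    simp only [numSet, Finset.mem_filter, Finset.mem_Icc, Finset.notMem_empty, iff_false,
      not_and, Nat.cast_zero, mul_zero, zero_sub, zero_add]
    rintro ⟨h1, h2⟩
    have hr1 : -(1/2 : ℝ) ≤ (p : ℝ) := Int.ceil_le.1 h1
    have hr2 : (p : ℝ) ≤ (1/2 : ℝ) := Int.le_floor.1 h2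
    have hp1 : -1 < p := by exact_mod_cast lt_of_lt_of_le (by norm_num : (-1:ℝ) < -(1/2)) hr1
    have hp2 : p < 1 := by exact_mod_cast lt_of_le_of_lt hr2 (by norm_num : (1/2:ℝ) < 1)
    have : p = 0 := by omega
    subst this
    simp [Int.gcd]
  rw [resSet, h]
  simp

lemma cover {Bl Bu γ τ : ℝ} (hγ0 : 0 < γ) (hγ : γ < 1 / 2) (hτ : 1 < τ) :
    Set.Icc Bl Bu \ {θ : ℝ | IsDioph γ τ θ} ⊆ ⋃ q : ℕ, resSet Bl Bu γ τ q := by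
  rintro θ ⟨hθB, hθD⟩
  simp only [Set.mem_setOf_eq, IsDioph, not_forall] at hθD
  obtain ⟨p, q, hq0, hlt⟩ := hθD
  rw [not_le] at hlt
  -- reduce to positive denominator
  obtain ⟨p, q, hq0, hlt⟩ : ∃ p q : ℤ, 0 < q ∧
      |(q : ℝ) * θ - (p : ℝ)| < γ * (q : ℝ) ^ (-τ) := by
    rcases lt_or_gt_of_ne hq0 with h | h
    · refine ⟨-p, -q, by omega, ?_⟩
      have e : ((-q : ℤ) : ℝ) * θ - ((-p : ℤ) : ℝ) = -((q:ℝ) * θ - (p:ℝ)) := by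
        push_cast; ring
      have e2 : ((-q : ℤ) : ℝ) = |(q:ℝ)| := by
        rw [abs_of_neg (by exact_mod_cast h)]; push_cast; ring
      rw [e, abs_neg, e2]
      exact hlt
    · refine ⟨p, q, h, ?_⟩
      rwa [abs_of_pos (by exact_mod_cast h : (0:ℝ) < (q:ℝ))] at hlt
  -- reduce to coprime numerator/denominator
  set d : ℤ := (Int.gcd p q : ℤ) with hd
  have hdpos : 0 < d := by
    have h0 : 0 < Int.gcd p q := Int.gcd_pos_of_ne_zero_right p (ne_of_gt hq0)
    rw [hd]; exact_mod_cast h0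
  have hdp : d ∣ p := Int.gcd_dvd_left p q
  have hdq : d ∣ q := Int.gcd_dvd_right p q
  set p₁ : ℤ := p / d with hp₁
  set q₁ : ℤ := q / d with hq₁
  have hpe : d * p₁ = p := Int.mul_ediv_cancel' hdp
  have hqe : d * q₁ = q := Int.mul_ediv_cancel' hdq
  have hq₁pos : 0 < q₁ := by
    rcases le_or_gt q₁ 0 with h | h
    · nlinarith [hqe]
    · exact h
  have hcop : Int.gcd p₁ q₁ = 1 := by
    have h0 : 0 < Int.gcd p q := Int.gcd_pos_of_ne_zero_right p (ne_of_gt hq0)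
    have := Int.gcd_div_gcd_div_gcd (i := p) (j := q) h0
    simpa [hp₁, hq₁, hd] using this
  -- real estimates
  have hdR : (1 : ℝ) ≤ (d : ℝ) := by exact_mod_cast hdpos
  have hq₁R : (0 : ℝ) < (q₁ : ℝ) := by exact_mod_cast hq₁pos
  have hq₁R1 : (1 : ℝ) ≤ (q₁ : ℝ) := by exact_mod_cast hq₁pos
  have hqR : (0 : ℝ) < (q : ℝ) := by exact_mod_cast hq0
  have habs : |(q₁ : ℝ) * θ - (p₁ : ℝ)| < γ * (q₁ : ℝ) ^ (-τ) := by
    have e : (q : ℝ) * θ - (p : ℝ) = (d : ℝ) * ((q₁ : ℝ) * θ - (p₁ : ℝ)) := by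
      rw [← hpe, ← hqe]; push_cast; ring
    rw [e, abs_mul, abs_of_pos (by linarith : (0:ℝ) < (d:ℝ))] at hlt
    have h1 : (q : ℝ) ^ (-τ) ≤ (q₁ : ℝ) ^ (-τ) := by
      apply Real.rpow_le_rpow_of_nonpos hq₁R _ (by linarith)
      calc (q₁ : ℝ) = 1 * (q₁ : ℝ) := by ring
        _ ≤ (d : ℝ) * (q₁ : ℝ) := by nlinarith
        _ = (q : ℝ) := by rw [← hqe]; push_cast; ring
    calc |(q₁ : ℝ) * θ - (p₁ : ℝ)|
        ≤ (d : ℝ) * |(q₁ : ℝ) * θ - (p₁ : ℝ)| := by nlinarith [abs_nonneg ((q₁:ℝ)*θ - p₁)]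
      _ < γ * (q : ℝ) ^ (-τ) := hlt
      _ ≤ γ * (q₁ : ℝ) ^ (-τ) := by nlinarith
  -- the denominator as a natural number
  set n : ℕ := q₁.toNat with hn
  have hnq : ((n : ℤ) : ℝ) = (q₁ : ℝ) := by
    rw [hn, Int.toNat_of_nonneg (le_of_lt hq₁pos)]
  have hnR : ((n : ℕ) : ℝ) = (q₁ : ℝ) := by exact_mod_cast hnq
  have hhalf : |(q₁ : ℝ) * θ - (p₁ : ℝ)| < 1 / 2 := by
    have : (q₁ : ℝ) ^ (-τ) ≤ 1 :=
      Real.rpow_le_one_of_one_le_of_nonpos hq₁R1 (by linarith)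
    nlinarith
  refine Set.mem_iUnion.2 ⟨n, ?_⟩
  rw [resSet]
  refine Set.mem_iUnion₂.2 ⟨p₁, ?_, ?_⟩
  · rw [numSet, Finset.mem_filter, Finset.mem_Icc]
    have h1 : Bl * (n : ℝ) - 1/2 ≤ (p₁ : ℝ) := by
      rw [hnR]
      have : Bl * (q₁:ℝ) ≤ (q₁:ℝ) * θ := by nlinarith [hθB.1]
      have := abs_lt.1 hhalf
      linarith
    have h2 : (p₁ : ℝ) ≤ Bu * (n : ℝ) + 1/2 := by
      rw [hnR]
      have : (q₁:ℝ) * θ ≤ Bu * (q₁:ℝ) := by nlinarith [hθB.2]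
      have := abs_lt.1 hhalf
      linarith
    refine ⟨⟨Int.ceil_le.2 h1, Int.le_floor.2 h2⟩, ?_⟩
    rw [show ((n : ℤ)) = q₁ by rw [hn, Int.toNat_of_nonneg (le_of_lt hq₁pos)]]
    exact hcop
  · refine ⟨hθB, ?_⟩
    have hpow : ((n:ℝ)) ^ (τ + 1) = (q₁ : ℝ) ^ τ * (q₁ : ℝ) := by
      rw [hnR, Real.rpow_add hq₁R, Real.rpow_one]
    have hq₁τ : (0:ℝ) < (q₁:ℝ) ^ τ := Real.rpow_pos_of_pos hq₁R τ
    have key : |θ - (p₁:ℝ)/(q₁:ℝ)| < γ / ((q₁:ℝ) ^ τ * (q₁:ℝ)) := by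
      have e : θ - (p₁:ℝ)/(q₁:ℝ) = ((q₁:ℝ) * θ - (p₁:ℝ))/(q₁:ℝ) := by field_simp
      rw [e, abs_div, abs_of_pos hq₁R, div_lt_div_iff₀ hq₁R (by positivity)]
      have hrw : γ * (q₁:ℝ) ^ (-τ) = γ / (q₁:ℝ) ^ τ := by
        rw [Real.rpow_neg (le_of_lt hq₁R)]; ring
      rw [hrw] at habs
      have h2 : |(q₁:ℝ) * θ - (p₁:ℝ)| * (q₁:ℝ) ^ τ < γ := (lt_div_iff₀ hq₁τ).1 habs
      nlinarith [abs_nonneg ((q₁:ℝ) * θ - (p₁:ℝ))]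
    have hk := abs_lt.1 key
    rw [Set.mem_Ioo, hpow, hnR]
    constructor <;> linarith


/-- Effective lower bound for the measure of `(γ,τ)`-Diophantine numbers in an interval
`B = [B̲,B̄]`, in terms of a cut-off `Q` of the denominators. -/
theorem measure_diophantine_lower_bound (Bl Bu γ τ : ℝ) (hγ0 : 0 < γ) (hγ : γ < 1 / 2)
    (hτ : 1 < τ) (Q : ℕ) (hQ : 1 ≤ Q) (hQB : 2 / (Q : ℝ) ≤ Bu - Bl) :
    (volume (Set.Icc Bl Bu ∩ {θ : ℝ | IsDioph γ τ θ})).toReal ≥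
      (volume (Set.Icc Bl Bu)).toReal * (1 - 4 * γ / ((τ - 1) * (Q : ℝ) ^ (τ - 1)))
        - ∑ q ∈ Finset.Icc 1 Q,
            ∑ p ∈ (Finset.Icc ⌊Bl * (q : ℝ)⌋ ⌈Bu * (q : ℝ)⌉).filter
                (fun p => Int.gcd p (q : ℤ) = 1),
              DeltaPQ Bl Bu γ τ p q := by
  have hQR : (0:ℝ) < (Q:ℝ) := by exact_mod_cast hQ
  have hBlu : 0 < Bu - Bl := lt_of_lt_of_le (by positivity) hQB
  have hτ0 : (0:ℝ) < τ - 1 := by linarith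
  have hQτ : (0:ℝ) < (Q:ℝ) ^ (τ - 1) := Real.rpow_pos_of_pos hQR _
  set Ssum : ℝ := ∑ q ∈ Finset.Icc 1 Q,
      ∑ p ∈ (Finset.Icc ⌊Bl * (q : ℝ)⌋ ⌈Bu * (q : ℝ)⌉).filter
          (fun p => Int.gcd p (q : ℤ) = 1),
        DeltaPQ Bl Bu γ τ p q with hSsum
  have hSsumnn : 0 ≤ Ssum := by
    rw [hSsum]
    refine Finset.sum_nonneg fun q hq => Finset.sum_nonneg fun p hp => ?_
    exact delta_nonneg hγ0 (Finset.mem_Icc.1 hq).1 (Finset.mem_filter.1 hp).1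
  set C : ℝ := (Bu - Bl) * (4 * γ / ((τ - 1) * (Q:ℝ) ^ (τ - 1))) with hC
  have hCnn : 0 ≤ C := by
    rw [hC]
    apply mul_nonneg hBlu.le
    apply div_nonneg (by linarith)
    exact mul_nonneg hτ0.le hQτ.le
  -- head bound
  have hhead : volume (⋃ q ∈ Finset.Icc 1 Q, resSet Bl Bu γ τ q) ≤ ENNReal.ofReal Ssum := by
    calc volume (⋃ q ∈ Finset.Icc 1 Q, resSet Bl Bu γ τ q)
        ≤ ∑ q ∈ Finset.Icc 1 Q, volume (resSet Bl Bu γ τ q) := measure_biUnion_finset_le _ _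
      _ ≤ ∑ q ∈ Finset.Icc 1 Q, ENNReal.ofReal
            (∑ p ∈ (Finset.Icc ⌊Bl * (q : ℝ)⌋ ⌈Bu * (q : ℝ)⌉).filter
                (fun p => Int.gcd p (q : ℤ) = 1), DeltaPQ Bl Bu γ τ p q) := by
          apply Finset.sum_le_sum
          intro q hq
          have hq1 : 1 ≤ q := (Finset.mem_Icc.1 hq).1
          calc volume (resSet Bl Bu γ τ q)
              ≤ ∑ p ∈ numSet Bl Bu q, volume (Set.Icc Bl Bu ∩
                  Set.Ioo ((p : ℝ) / q - γ / (q : ℝ) ^ (τ + 1))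
                    ((p : ℝ) / q + γ / (q : ℝ) ^ (τ + 1))) := measure_biUnion_finset_le _ _
            _ ≤ ∑ p ∈ numSet Bl Bu q, ENNReal.ofReal (DeltaPQ Bl Bu γ τ p q) :=
                Finset.sum_le_sum fun p _ => vol_le_delta p
            _ ≤ ∑ p ∈ (Finset.Icc ⌊Bl * (q : ℝ)⌋ ⌈Bu * (q : ℝ)⌉).filter
                  (fun p => Int.gcd p (q : ℤ) = 1), ENNReal.ofReal (DeltaPQ Bl Bu γ τ p q) :=
                Finset.sum_le_sum_of_subset (numSet_subset Bl Bu q)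
            _ = ENNReal.ofReal (∑ p ∈ (Finset.Icc ⌊Bl * (q : ℝ)⌋ ⌈Bu * (q : ℝ)⌉).filter
                  (fun p => Int.gcd p (q : ℤ) = 1), DeltaPQ Bl Bu γ τ p q) :=
                (ENNReal.ofReal_sum_of_nonneg fun p hp =>
                  delta_nonneg hγ0 hq1 (Finset.mem_filter.1 hp).1).symm
      _ = ENNReal.ofReal Ssum := by
          rw [hSsum]
          exact (ENNReal.ofReal_sum_of_nonneg fun q hq => Finset.sum_nonneg fun p hp =>
            delta_nonneg hγ0 (Finset.mem_Icc.1 hq).1 (Finset.mem_filter.1 hp).1).symm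
  -- tail bound
  have h2Q : 2 ≤ (Bu - Bl) * (Q:ℝ) := by
    rw [div_le_iff₀ hQR] at hQB
    linarith
  have htail : volume (⋃ n : ℕ, resSet Bl Bu γ τ (n + (Q+1))) ≤ ENNReal.ofReal C := by
    have hterm : ∀ n : ℕ, volume (resSet Bl Bu γ τ (n + (Q+1)))
        ≤ ENNReal.ofReal (4 * γ * (Bu - Bl) * ((n + (Q+1) : ℕ) : ℝ) ^ (-τ)) := by
      intro n
      apply vol_resSet_le hγ0 (by omega)
      have hcast : (Q:ℝ) ≤ ((n + (Q+1) : ℕ) : ℝ) := by push_cast; linarith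
      nlinarith
    have hnn : ∀ n : ℕ, 0 ≤ 4 * γ * (Bu - Bl) * ((n + (Q+1) : ℕ) : ℝ) ^ (-τ) := by
      intro n
      have h1 : (0:ℝ) ≤ ((n + (Q+1) : ℕ) : ℝ) ^ (-τ) := Real.rpow_nonneg (Nat.cast_nonneg _) _
      have h2 : (0:ℝ) ≤ 4 * γ * (Bu - Bl) := by nlinarith
      exact mul_nonneg h2 h1
    have hsummable : Summable (fun n : ℕ => 4 * γ * (Bu - Bl) * ((n + (Q+1) : ℕ) : ℝ) ^ (-τ)) := by
      apply Summable.mul_left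
      exact (summable_nat_add_iff (Q+1)).mpr (Real.summable_nat_rpow.mpr (by linarith))
    calc volume (⋃ n : ℕ, resSet Bl Bu γ τ (n + (Q+1)))
        ≤ ∑' n : ℕ, volume (resSet Bl Bu γ τ (n + (Q+1))) := measure_iUnion_le _
      _ ≤ ∑' n : ℕ, ENNReal.ofReal (4 * γ * (Bu - Bl) * ((n + (Q+1) : ℕ) : ℝ) ^ (-τ)) :=
          ENNReal.tsum_le_tsum hterm
      _ = ENNReal.ofReal (∑' n : ℕ, 4 * γ * (Bu - Bl) * ((n + (Q+1) : ℕ) : ℝ) ^ (-τ)) :=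
          (ENNReal.ofReal_tsum_of_nonneg hnn hsummable).symm
      _ ≤ ENNReal.ofReal C := by
          apply ENNReal.ofReal_le_ofReal
          rw [tsum_mul_left]
          have ht := tail_sum hτ hQ
          have hc4 : 0 ≤ 4 * γ * (Bu - Bl) := by nlinarith
          calc 4 * γ * (Bu - Bl) * ∑' n : ℕ, ((n + (Q+1) : ℕ) : ℝ) ^ (-τ)
              ≤ 4 * γ * (Bu - Bl) * ((Q:ℝ) ^ (1 - τ) / (τ - 1)) :=
                mul_le_mul_of_nonneg_left ht hc4
            _ = C := by
                rw [hC, show (1:ℝ) - τ = -(τ - 1) by ring, Real.rpow_neg hQR.le]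
                field_simp
  -- cover
  have hU : Set.Icc Bl Bu \ {θ : ℝ | IsDioph γ τ θ} ⊆
      (⋃ q ∈ Finset.Icc 1 Q, resSet Bl Bu γ τ q) ∪ ⋃ n : ℕ, resSet Bl Bu γ τ (n + (Q+1)) := by
    intro θ hθ
    obtain ⟨q, hqmem⟩ := Set.mem_iUnion.1 (cover hγ0 hγ hτ hθ)
    rcases le_or_gt q Q with h | h
    · rcases Nat.eq_zero_or_pos q with rfl | hq1
      · rw [resSet_zero] at hqmem
        exact absurd hqmem (Set.notMem_empty θ)
      · exact Or.inl (Set.mem_biUnion (Finset.mem_Icc.2 ⟨hq1, h⟩) hqmem)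
    · refine Or.inr (Set.mem_iUnion.2 ⟨q - (Q+1), ?_⟩)
      rw [Nat.sub_add_cancel (by omega)]
      exact hqmem
  have hkey : volume (Set.Icc Bl Bu \ {θ : ℝ | IsDioph γ τ θ}) ≤ ENNReal.ofReal (Ssum + C) :=
    calc volume (Set.Icc Bl Bu \ {θ : ℝ | IsDioph γ τ θ})
        ≤ volume ((⋃ q ∈ Finset.Icc 1 Q, resSet Bl Bu γ τ q) ∪
            ⋃ n : ℕ, resSet Bl Bu γ τ (n + (Q+1))) := measure_mono hU
      _ ≤ volume (⋃ q ∈ Finset.Icc 1 Q, resSet Bl Bu γ τ q) +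
            volume (⋃ n : ℕ, resSet Bl Bu γ τ (n + (Q+1))) := measure_union_le _ _
      _ ≤ ENNReal.ofReal Ssum + ENNReal.ofReal C := add_le_add hhead htail
      _ = ENNReal.ofReal (Ssum + C) := (ENNReal.ofReal_add hSsumnn hCnn).symm
  -- conclusion
  have hms := measurable_dioph γ τ
  have hsplit : volume (Set.Icc Bl Bu ∩ {θ : ℝ | IsDioph γ τ θ}) +
      volume (Set.Icc Bl Bu \ {θ : ℝ | IsDioph γ τ θ}) = volume (Set.Icc Bl Bu) :=
    measure_inter_add_diff _ hms
  have hvolB : volume (Set.Icc Bl Bu) = ENNReal.ofReal (Bu - Bl) := Real.volume_Icc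
  have hfinB : volume (Set.Icc Bl Bu) ≠ ⊤ := by rw [hvolB]; exact ENNReal.ofReal_ne_top
  have hfin1 : volume (Set.Icc Bl Bu ∩ {θ : ℝ | IsDioph γ τ θ}) ≠ ⊤ :=
    ne_top_of_le_ne_top hfinB (measure_mono Set.inter_subset_left)
  have hfin2 : volume (Set.Icc Bl Bu \ {θ : ℝ | IsDioph γ τ θ}) ≠ ⊤ :=
    ne_top_of_le_ne_top hfinB (measure_mono Set.diff_subset)
  have hadd : (volume (Set.Icc Bl Bu ∩ {θ : ℝ | IsDioph γ τ θ})).toReal +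
      (volume (Set.Icc Bl Bu \ {θ : ℝ | IsDioph γ τ θ})).toReal = Bu - Bl := by
    rw [← ENNReal.toReal_add hfin1 hfin2, hsplit, hvolB, ENNReal.toReal_ofReal hBlu.le]
  have hle : (volume (Set.Icc Bl Bu \ {θ : ℝ | IsDioph γ τ θ})).toReal ≤ Ssum + C :=
    ENNReal.toReal_le_of_le_ofReal (by linarith) hkey
  rw [ge_iff_le, hvolB, ENNReal.toReal_ofReal hBlu.le]
  have hexp : (Bu - Bl) * (1 - 4 * γ / ((τ - 1) * (Q:ℝ) ^ (τ - 1))) = (Bu - Bl) - C := by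
    rw [hC]; ring
  rw [hexp]
  linarith
end
end

section
/- Let 0 < γ < 1/2 and τ > 1. Then the Lebesgue measure of the set of (γ,τ)-Diophantine numbers in [0,1] satisfies Leb([0,1] ∩ D(γ,τ)) ≥ 1 − 2γ·Σ_{q=1}^{∞} φ(q)/q^{τ+1} = 1 − 2γ·ζ(τ)/ζ(τ+1), where φ is Euler's totient function and ζ is the Riemann zeta function. -/
open MeasureTheory

noncomputable section

open scoped ENNReal LSeries.notation
open LSeries Complex

set_option linter.unusedTactic false
set_option linter.unreachableTactic false

lemma exists_reduced (γ τ θ : ℝ) (hγ0 : 0 < γ) (hγ : γ < 1/2) (hτ : 0 < τ)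
    (hθ0 : 0 ≤ θ) (hθ1 : θ ≤ 1) (h : ¬ IsDioph γ τ θ) :
    ∃ a b : ℕ, 0 < b ∧ a ≤ b ∧ Nat.Coprime a b ∧
      |θ - (a:ℝ)/(b:ℝ)| < γ / (b:ℝ)^(τ+1) := by
  rw [IsDioph] at h
  push_neg at h
  obtain ⟨p, q, hq, hlt⟩ := h
  have main : ∀ p q : ℤ, 0 < q → (|(q:ℝ)*θ - p| < γ * |(q:ℝ)|^(-τ)) →
      |θ - (p:ℝ)/q| < γ/(q:ℝ)^(τ+1) := by
    intro p q hq hlt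
    have hqR : (0:ℝ) < q := by exact_mod_cast hq
    rw [abs_of_pos hqR] at hlt
    have heq : θ - (p:ℝ)/q = ((q:ℝ)*θ - p)/q := by field_simp
    rw [heq, abs_div, abs_of_pos hqR, div_lt_iff₀ hqR]
    have hqτ : (q:ℝ)^(τ+1) = (q:ℝ)^τ * q := by rw [Real.rpow_add hqR, Real.rpow_one]
    have h2 : γ / (q:ℝ)^(τ+1) * q = γ * (q:ℝ)^(-τ) := by
      rw [hqτ, Real.rpow_neg hqR.le]
      field_simp
    rw [h2]
    exact hlt
  have key : ∃ p q : ℤ, 0 < q ∧ |θ - (p:ℝ)/q| < γ / (q:ℝ)^(τ+1) := by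
    rcases Ne.lt_or_gt hq with hneg | hpos
    · refine ⟨-p, -q, by omega, ?_⟩
      have := main (-p) (-q) (by omega) ?_
      · convert this using 3 <;> push_cast <;> ring
      · push_cast
        calc |-(q:ℝ)*θ - -(p:ℝ)| = |(q:ℝ)*θ - p| := by rw [← abs_neg]; ring_nf
          _ < γ * |(q:ℝ)|^(-τ) := hlt
          _ = γ * |-(q:ℝ)|^(-τ) := by rw [abs_neg]
    · exact ⟨p, q, hpos, main p q hpos hlt⟩
  clear hlt hq main
  obtain ⟨p, q, hq0, hclose⟩ := key
  set d : ℕ := Int.gcd p q with hd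
  have hd0 : 0 < d := Int.gcd_pos_iff.mpr (Or.inr (by omega))
  set a' : ℤ := p / d with ha'
  set b' : ℤ := q / d with hb'
  have hpd : (d:ℤ) ∣ p := Int.gcd_dvd_left p q
  have hqd : (d:ℤ) ∣ q := Int.gcd_dvd_right p q
  have hp' : (d:ℤ) * a' = p := Int.mul_ediv_cancel' hpd
  have hq' : (d:ℤ) * b' = q := Int.mul_ediv_cancel' hqd
  have hd1 : (1:ℤ) ≤ (d:ℤ) := by exact_mod_cast hd0
  have hb'0 : 0 < b' := by nlinarith [hq']
  have hcop : Int.gcd a' b' = 1 := Int.gcd_div_gcd_div_gcd hd0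
  have hdR : ((d:ℤ):ℝ) ≠ 0 := by exact_mod_cast (by omega : (d:ℤ) ≠ 0)
  have hfrac : (p:ℝ)/q = (a':ℝ)/b' := by
    have h1 : (p:ℝ) = (d:ℤ) * a' := by exact_mod_cast hp'.symm
    have h2 : (q:ℝ) = (d:ℤ) * b' := by exact_mod_cast hq'.symm
    rw [h1, h2, mul_div_mul_left _ _ hdR]
  have hb'R : (0:ℝ) < (b':ℝ) := by exact_mod_cast hb'0
  have hb'q : (b':ℝ) ≤ (q:ℝ) := by
    have : b' ≤ q := Int.le_of_dvd hq0 ⟨d, by linarith [hq']⟩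
    exact_mod_cast this
  have hmono : γ/(q:ℝ)^(τ+1) ≤ γ/(b':ℝ)^(τ+1) := by
    gcongr
  have hclose' : |θ - (a':ℝ)/b'| < γ/(b':ℝ)^(τ+1) := by
    rw [← hfrac]; exact hclose.trans_le hmono
  have hb'1 : (1:ℝ) ≤ (b':ℝ) := by exact_mod_cast hb'0
  have hpow : (b':ℝ) ≤ (b':ℝ)^(τ+1) := by
    calc (b':ℝ) = (b':ℝ)^(1:ℝ) := (Real.rpow_one _).symm
      _ ≤ _ := Real.rpow_le_rpow_of_exponent_le hb'1 (by linarith)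
  have hr : γ/(b':ℝ)^(τ+1) ≤ γ/(b':ℝ) := by gcongr
  have habs : |θ - (a':ℝ)/b'| < γ/(b':ℝ) := hclose'.trans_le hr
  rw [abs_lt] at habs
  have hγb : γ/(b':ℝ) < 1/(b':ℝ) := by gcongr ?_ / _; linarith
  have ha'0 : 0 ≤ a' := by
    by_contra hn
    push_neg at hn
    have h1 : (a':ℝ) ≤ -1 := by exact_mod_cast (by omega : a' ≤ -1)
    have h2 : (a':ℝ)/b' ≤ -1/(b':ℝ) := by gcongr
    have h4 : (1:ℝ)/b' ≤ θ - (a':ℝ)/b' := by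
      rw [neg_div] at h2; linarith
    linarith [habs.2]
  have ha'b : a' ≤ b' := by
    by_contra hn
    push_neg at hn
    have h1 : ((b':ℝ)+1) ≤ (a':ℝ) := by exact_mod_cast (by omega : b' + 1 ≤ a')
    have h2 : ((b':ℝ)+1)/b' ≤ (a':ℝ)/b' := by gcongr
    have h3 : ((b':ℝ)+1)/b' = 1 + 1/b' := by field_simp
    have h4 : θ - (a':ℝ)/b' ≤ 1 - (1 + 1/(b':ℝ)) := by
      rw [h3] at h2; linarith
    linarith [habs.1]
  refine ⟨a'.toNat, b'.toNat, by omega, by omega, ?_, ?_⟩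
  · have e1 : (a'.toNat : ℤ) = a' := Int.toNat_of_nonneg ha'0
    have e2 : (b'.toNat : ℤ) = b' := Int.toNat_of_nonneg hb'0.le
    rw [Nat.Coprime]
    rw [← Int.gcd_natCast_natCast, e1, e2]
    exact hcop
  · have e1 : ((a'.toNat : ℕ) : ℝ) = (a':ℝ) := by exact_mod_cast Int.toNat_of_nonneg ha'0
    have e2 : ((b'.toNat : ℕ) : ℝ) = (b':ℝ) := by exact_mod_cast Int.toNat_of_nonneg hb'0.le
    rw [e1, e2]
    exact hclose'

lemma totient_summable' (τ : ℝ) (hτ : 1 < τ) :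
    Summable (fun q : ℕ => (Nat.totient q : ℝ) / (q : ℝ) ^ (τ + 1)) := by
  have h0 : Summable (fun q : ℕ => (q : ℝ) ^ (-τ)) :=
    (Real.summable_nat_rpow (p := -τ)).mpr (by linarith)
  refine h0.of_nonneg_of_le (fun q => by positivity) (fun q => ?_)
  rcases Nat.eq_zero_or_pos q with rfl | hq
  · simp
    exact Real.rpow_nonneg le_rfl _
  have hq1 : (1 : ℝ) ≤ (q : ℝ) := by exact_mod_cast hq
  have hq0 : (0 : ℝ) < (q : ℝ) := by linarith
  have h1 : (Nat.totient q : ℝ) ≤ (q : ℝ) := by exact_mod_cast Nat.totient_le q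
  have h2 : (q : ℝ) ^ (τ + 1) = (q : ℝ) ^ τ * q := by
    rw [Real.rpow_add hq0, Real.rpow_one]
  rw [Real.rpow_neg hq0.le, h2]
  rw [div_le_iff₀ (by positivity)]
  calc (Nat.totient q : ℝ) ≤ (q:ℝ) := h1
    _ = ((q:ℝ)^τ)⁻¹ * ((q:ℝ)^τ * q) := by field_simp

lemma measure_part (γ τ : ℝ) (hγ0 : 0 < γ) (hγ : γ < 1/2) (hτ : 1 < τ) :
    (volume (Set.Icc (0 : ℝ) 1 ∩ {θ : ℝ | IsDioph γ τ θ})).toReal ≥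
        1 - 2 * γ * ∑' q : ℕ, (Nat.totient q : ℝ) / (q : ℝ) ^ (τ + 1) := by
  classical
  set S := ∑' q : ℕ, (Nat.totient q : ℝ) / (q : ℝ) ^ (τ + 1) with hS
  set T : ℕ → Finset ℕ := fun b => (Finset.range (b+1)).filter (fun a => Nat.Coprime a b)
    with hT
  set C : ℕ → Set ℝ := fun b =>
    ⋃ a ∈ T b, (Set.Icc (0:ℝ) 1 ∩ Metric.ball ((a:ℝ)/(b:ℝ)) (γ / (b:ℝ)^(τ+1))) with hC
  set A : Set ℝ := Set.Icc (0:ℝ) 1 ∩ {θ : ℝ | IsDioph γ τ θ} with hA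
  set Bad : Set ℝ := Set.Icc (0:ℝ) 1 \ {θ : ℝ | IsDioph γ τ θ} with hBad
  have hcover : Bad ⊆ ⋃ b, C b := by
    intro θ hθ
    obtain ⟨hθI, hθD⟩ := hθ
    obtain ⟨a, b, hb, hab, hcop, hclose⟩ :=
      exists_reduced γ τ θ hγ0 hγ (by linarith) hθI.1 hθI.2 hθD
    have hmem : a ∈ T b := by
      simp only [hT, Finset.mem_filter, Finset.mem_range, Nat.lt_succ_iff]
      exact ⟨hab, hcop⟩
    have hball : θ ∈ Metric.ball ((a:ℝ)/(b:ℝ)) (γ / (b:ℝ)^(τ+1)) := by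
      rw [Metric.mem_ball, Real.dist_eq]
      exact hclose
    exact Set.mem_iUnion.mpr ⟨b, Set.mem_biUnion hmem ⟨hθI, hball⟩⟩
  have hvolC : ∀ b : ℕ,
      volume (C b) ≤ ENNReal.ofReal (2*γ*(Nat.totient b : ℝ)/(b:ℝ)^(τ+1)) := by
    intro b
    match b with
    | 0 =>
        have hT0 : T 0 = ∅ := by decide
        simp [hC, hT0]
    | 1 =>
        have hT1 : T 1 = {0, 1} := by decide
        have hle := measure_biUnion_finset_le (μ := volume) (T 1)
          (fun a => Set.Icc (0:ℝ) 1 ∩ Metric.ball ((a:ℝ)/(1:ℕ)) (γ / ((1:ℕ):ℝ)^(τ+1)))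
        have hr1 : γ / ((1:ℕ):ℝ)^(τ+1) = γ := by
          norm_num
        have hb0 : volume (Set.Icc (0:ℝ) 1 ∩ Metric.ball (((0:ℕ):ℝ)/(1:ℕ)) (γ / ((1:ℕ):ℝ)^(τ+1)))
            ≤ ENNReal.ofReal γ := by
          rw [hr1]
          have hsub0 : Set.Icc (0:ℝ) 1 ∩ Metric.ball (((0:ℕ):ℝ)/(1:ℕ)) γ ⊆ Set.Ico (0:ℝ) γ := by
            intro x hx
            obtain ⟨hxI, hxB⟩ := hx
            rw [Metric.mem_ball, Real.dist_eq] at hxB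
            norm_num at hxB
            exact Set.mem_Ico.mpr ⟨hxI.1, by cases abs_lt.mp hxB; linarith⟩
          calc volume _ ≤ volume (Set.Ico (0:ℝ) γ) := measure_mono hsub0
            _ = ENNReal.ofReal γ := by rw [Real.volume_Ico]; norm_num
        have hb1 : volume (Set.Icc (0:ℝ) 1 ∩ Metric.ball (((1:ℕ):ℝ)/(1:ℕ)) (γ / ((1:ℕ):ℝ)^(τ+1)))
            ≤ ENNReal.ofReal γ := by
          rw [hr1]
          have hsub1 : Set.Icc (0:ℝ) 1 ∩ Metric.ball (((1:ℕ):ℝ)/(1:ℕ)) γ ⊆ Set.Ioc (1-γ) 1 := by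
            intro x hx
            obtain ⟨hxI, hxB⟩ := hx
            rw [Metric.mem_ball, Real.dist_eq] at hxB
            norm_num at hxB
            exact Set.mem_Ioc.mpr ⟨by cases abs_lt.mp hxB; linarith, hxI.2⟩
          calc volume _ ≤ volume (Set.Ioc (1-γ) 1) := measure_mono hsub1
            _ = ENNReal.ofReal γ := by rw [Real.volume_Ioc]; norm_num
        calc volume (C 1) ≤ ∑ a ∈ T 1,
              volume (Set.Icc (0:ℝ) 1 ∩ Metric.ball ((a:ℝ)/(1:ℕ)) (γ / ((1:ℕ):ℝ)^(τ+1))) := by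
              rw [hC]; exact hle
          _ ≤ ENNReal.ofReal γ + ENNReal.ofReal γ := by
              rw [hT1, Finset.sum_pair (by norm_num : (0:ℕ) ≠ 1)]
              exact add_le_add hb0 hb1
          _ ≤ ENNReal.ofReal (2*γ*(Nat.totient 1 : ℝ)/((1:ℕ):ℝ)^(τ+1)) := by
              rw [← ENNReal.ofReal_add hγ0.le hγ0.le]
              apply ENNReal.ofReal_le_ofReal
              norm_num
              linarith
    | (n+2) =>
        set b := n + 2 with hb
        have hb2 : 2 ≤ b := by omega
        have hcard : (T b).card = Nat.totient b := by
          have hTb : T b = (Finset.range b).filter (fun a => Nat.Coprime a b) := by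
            ext a
            simp only [hT, Finset.mem_filter, Finset.mem_range]
            constructor
            · rintro ⟨hlt, hcop⟩
              refine ⟨?_, hcop⟩
              rcases Nat.lt_or_ge a b with h | h
              · exact h
              · exfalso
                have heq : a = b := by omega
                rw [heq, Nat.Coprime, Nat.gcd_self] at hcop
                omega
            · rintro ⟨hlt, hcop⟩
              exact ⟨by omega, hcop⟩
          rw [hTb, Nat.totient_eq_card_coprime]
          congr 1
          apply Finset.filter_congr
          intro a _
          simp [Nat.coprime_comm]
        calc volume (C b) ≤ ∑ a ∈ T b,
              volume (Set.Icc (0:ℝ) 1 ∩ Metric.ball ((a:ℝ)/(b:ℝ)) (γ / (b:ℝ)^(τ+1))) := by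
              rw [hC]; exact measure_biUnion_finset_le _ _
          _ ≤ ∑ a ∈ T b, ENNReal.ofReal (2 * (γ / (b:ℝ)^(τ+1))) := by
              refine Finset.sum_le_sum fun a _ => ?_
              refine le_trans (measure_mono Set.inter_subset_right) ?_
              rw [Real.volume_ball]
          _ = ENNReal.ofReal ((Nat.totient b : ℝ) * (2 * (γ / (b:ℝ)^(τ+1)))) := by
              rw [Finset.sum_const, hcard, nsmul_eq_mul,
                ← ENNReal.ofReal_natCast (Nat.totient b),
                ← ENNReal.ofReal_mul (by positivity)]
          _ ≤ ENNReal.ofReal (2*γ*(Nat.totient b : ℝ)/(b:ℝ)^(τ+1)) := by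
              apply ENNReal.ofReal_le_ofReal
              rw [mul_div_assoc]
              ring_nf
              exact le_refl _
  have hsum0 := totient_summable' τ hτ
  have hsum' : Summable (fun b : ℕ => 2*γ*(Nat.totient b : ℝ)/(b:ℝ)^(τ+1)) := by
    have := hsum0.mul_left (2*γ)
    refine this.congr fun b => ?_
    ring
  have hbadset : volume Bad ≤ ENNReal.ofReal (2*γ*S) := by
    calc volume Bad ≤ volume (⋃ b, C b) := measure_mono hcover
      _ ≤ ∑' b, volume (C b) := measure_iUnion_le _
      _ ≤ ∑' b, ENNReal.ofReal (2*γ*(Nat.totient b : ℝ)/(b:ℝ)^(τ+1)) :=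
          ENNReal.tsum_le_tsum hvolC
      _ = ENNReal.ofReal (∑' b : ℕ, 2*γ*(Nat.totient b : ℝ)/(b:ℝ)^(τ+1)) :=
          (ENNReal.ofReal_tsum_of_nonneg (fun b => by positivity) hsum').symm
      _ = ENNReal.ofReal (2*γ*S) := by
          congr 1
          rw [hS, ← tsum_mul_left]
          refine tsum_congr fun b => ?_
          ring
  have hS0 : 0 ≤ S := tsum_nonneg fun b => by positivity
  have hsub : Set.Icc (0:ℝ) 1 ⊆ A ∪ Bad := by
    intro x hx
    by_cases h : x ∈ {θ : ℝ | IsDioph γ τ θ}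
    · exact Or.inl ⟨hx, h⟩
    · exact Or.inr ⟨hx, h⟩
  have h1 : (1:ℝ≥0∞) ≤ volume A + volume Bad := by
    calc (1:ℝ≥0∞) = volume (Set.Icc (0:ℝ) 1) := by
          rw [Real.volume_Icc]; norm_num
      _ ≤ volume (A ∪ Bad) := measure_mono hsub
      _ ≤ volume A + volume Bad := measure_union_le _ _
  have hAfin : volume A ≠ ⊤ := by
    refine ne_top_of_le_ne_top ?_ (measure_mono Set.inter_subset_left)
    rw [Real.volume_Icc]
    exact ENNReal.ofReal_ne_top
  have hBfin : volume Bad ≠ ⊤ := ne_top_of_le_ne_top ENNReal.ofReal_ne_top hbadset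
  have h2 : (1:ℝ) ≤ (volume A).toReal + (volume Bad).toReal := by
    have := ENNReal.toReal_mono (by
      exact ENNReal.add_ne_top.mpr ⟨hAfin, hBfin⟩) h1
    rwa [ENNReal.toReal_one, ENNReal.toReal_add hAfin hBfin] at this
  have h3 : (volume Bad).toReal ≤ 2*γ*S := ENNReal.toReal_le_of_le_ofReal (by positivity) hbadset
  linarith


lemma totient_zeta (τ : ℝ) (hτ : 1 < τ) :
    ((∑' q : ℕ, (Nat.totient q : ℝ) / (q : ℝ) ^ (τ + 1) : ℝ) : ℂ) =
        riemannZeta (τ : ℂ) / riemannZeta ((τ : ℝ) + 1 : ℂ) := by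
  set s : ℂ := ((τ : ℝ) + 1 : ℂ) with hs
  have hsre : s.re = τ + 1 := by simp [hs]
  have hφ : LSeriesSummable (fun n => (Nat.totient n : ℂ)) s := by
    refine LSeriesSummable_of_le_const_mul_rpow (x := 2) (by rw [hsre]; linarith) ?_
    refine ⟨1, fun n hn => ?_⟩
    have : ‖(Nat.totient n : ℂ)‖ = (Nat.totient n : ℝ) := by
      simp [Complex.norm_natCast]
    rw [this, one_mul, show (2:ℝ)-1 = 1 by norm_num, Real.rpow_one]
    exact_mod_cast Nat.totient_le n
  have h1 : LSeriesSummable 1 s := by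
    rw [LSeriesSummable_one_iff, hsre]; linarith
  have hconv : ((1 : ℕ → ℂ) ⍟ (fun n => (Nat.totient n : ℂ))) = fun n : ℕ => (n : ℂ) := by
    funext n
    rcases Nat.eq_zero_or_pos n with rfl | hn
    · rw [convolution_map_zero]; simp
    · rw [LSeries.convolution_def]
      simp only [Pi.one_apply, one_mul]
      rw [Nat.sum_divisorsAntidiagonal' (f := fun _ y => (Nat.totient y : ℂ))]
      rw [← Nat.cast_sum]
      rw [Nat.sum_totient]
  have hmul := LSeries_convolution' h1 hφ
  rw [hconv] at hmul
  have hL1 : LSeries 1 s = riemannZeta s := LSeries_one_eq_riemannZeta (by rw [hsre]; linarith)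
  have hid : LSeries (fun n => (n : ℂ)) s = riemannZeta (τ : ℂ) := by
    have hterm : ∀ n, term (fun n => (n : ℂ)) s n = term 1 (s - 1) n := by
      intro n
      rcases Nat.eq_zero_or_pos n with rfl | hn
      · simp
      · rw [term_of_ne_zero hn.ne', term_of_ne_zero hn.ne']
        have hn0 : (n : ℂ) ≠ 0 := Nat.cast_ne_zero.mpr hn.ne'
        rw [Pi.one_apply]
        rw [cpow_sub _ _ hn0, cpow_one, one_div_div]
    have : LSeries (fun n => (n : ℂ)) s = LSeries 1 (s - 1) := tsum_congr hterm
    rw [this, show s - 1 = (τ : ℂ) by ring]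
    exact LSeries_one_eq_riemannZeta (by simp; linarith)
  have hζne : riemannZeta s ≠ 0 := riemannZeta_ne_zero_of_one_lt_re (by rw [hsre]; linarith)
  have hLφ : LSeries (fun n => (Nat.totient n : ℂ)) s = riemannZeta (τ : ℂ) / riemannZeta s := by
    rw [eq_div_iff hζne, ← hid, hmul, hL1]; ring
  rw [← hLφ]
  rw [Complex.ofReal_tsum]
  refine tsum_congr fun n => ?_
  rcases Nat.eq_zero_or_pos n with rfl | hn
  · simp [LSeries.term]
  · rw [term_of_ne_zero hn.ne']
    have hpow : (((n:ℝ)^(τ+1) : ℝ) : ℂ) = (n:ℂ)^s := by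
      rw [Complex.ofReal_cpow (Nat.cast_nonneg n)]
      push_cast
      rfl
    rw [Complex.ofReal_div, hpow, Complex.ofReal_natCast]


/-- The measure of `(γ,τ)`-Diophantine numbers in `[0,1]` is at least
`1 − 2γ Σ_{q≥1} φ(q)/q^{τ+1} = 1 − 2γ ζ(τ)/ζ(τ+1)`. -/
theorem measure_diophantine_unit_interval (γ τ : ℝ) (hγ0 : 0 < γ) (hγ : γ < 1 / 2)
    (hτ : 1 < τ) :
    (volume (Set.Icc (0 : ℝ) 1 ∩ {θ : ℝ | IsDioph γ τ θ})).toReal ≥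
        1 - 2 * γ * ∑' q : ℕ, (Nat.totient q : ℝ) / (q : ℝ) ^ (τ + 1) ∧
      ((∑' q : ℕ, (Nat.totient q : ℝ) / (q : ℝ) ^ (τ + 1) : ℝ) : ℂ) =
        riemannZeta (τ : ℂ) / riemannZeta ((τ : ℝ) + 1 : ℂ) := by
  exact ⟨measure_part γ τ hγ0 hγ hτ, totient_zeta τ hτ⟩
end
end

section
/- Let N ∈ ℕ be even and let F(x) = Σ_{k=−N/2}^{N/2−1} F̂_k e^{2πikx} be a trigonometric polynomial with complex coefficients satisfying F̂_{−N/2} = 0 and F̂_{−k} = conj(F̂_k) for all k (so that F is real-valued on ℝ). Then for every ρ ≥ 0, sup_{x ∈ 𝕋̄_ρ} |F(x)| ≤ max_{0 ≤ j < N} |F(j/N + iρ)| + (1/(2N))·Σ_{k=−N/2}^{N/2−1} 2π|k|·|F̂_k|·e^{2π|k|ρ}. -/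
noncomputable section

/-- Closed complex strip of half-width `ρ` around the real axis. -/
def stripC (ρ : ℝ) : Set ℂ := {x : ℂ | |x.im| ≤ ρ}

namespace TrigPolyAux

open Complex Finset

/-- The trigonometric polynomial. -/
def F (M : ℕ) (c : ℤ → ℂ) (z : ℂ) : ℂ :=
  ∑ k ∈ Finset.Icc (-(M : ℤ)) ((M : ℤ) - 1),
    c k * Complex.exp (2 * (Real.pi : ℂ) * Complex.I * (k : ℂ) * z)

lemma abs_exp_eq (k : ℤ) (z : ℂ) :
    ‖Complex.exp (2 * (Real.pi : ℂ) * Complex.I * (k : ℂ) * z)‖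
      = Real.exp (-(2 * Real.pi * (k : ℝ) * z.im)) := by
  rw [Complex.norm_exp]
  congr 1
  have h : 2 * (Real.pi : ℂ) * Complex.I * (k : ℂ) * z
      = ((2 * Real.pi * (k : ℝ) : ℝ) : ℂ) * (Complex.I * z) := by push_cast; ring
  rw [h, Complex.re_ofReal_mul, Complex.I_mul_re]
  ring

lemma abs_exp_le (k : ℤ) (z : ℂ) (ρ : ℝ) (hz : |z.im| ≤ ρ) :
    ‖Complex.exp (2 * (Real.pi : ℂ) * Complex.I * (k : ℂ) * z)‖
      ≤ Real.exp (2 * Real.pi * |(k : ℝ)| * ρ) := by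
  rw [abs_exp_eq]
  apply Real.exp_le_exp.mpr
  have h1 : -((k:ℝ) * z.im) ≤ |(k:ℝ)| * ρ := by
    calc -((k:ℝ) * z.im) ≤ |(k:ℝ) * z.im| := neg_le_abs _
    _ = |(k:ℝ)| * |z.im| := abs_mul _ _
    _ ≤ |(k:ℝ)| * ρ := mul_le_mul_of_nonneg_left hz (abs_nonneg _)
  nlinarith [Real.pi_pos]

lemma F_diff (M : ℕ) (c : ℤ → ℂ) : Differentiable ℂ (F M c) := by
  apply Differentiable.fun_sum
  intro k _
  exact (differentiable_const _).mul ((differentiable_id.const_mul _).cexp)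

lemma F_periodic (M : ℕ) (c : ℤ → ℂ) (z : ℂ) (n : ℤ) :
    F M c (z + (n : ℂ)) = F M c z := by
  unfold F
  refine Finset.sum_congr rfl fun k _ => ?_
  congr 1
  have h : 2 * (Real.pi : ℂ) * Complex.I * (k : ℂ) * (z + (n : ℂ))
      = 2 * (Real.pi : ℂ) * Complex.I * (k : ℂ) * z
        + ((k * n : ℤ) : ℂ) * (2 * (Real.pi : ℂ) * Complex.I) := by
    push_cast; ring
  rw [h, Complex.exp_add, Complex.exp_int_mul_two_pi_mul_I, mul_one]

lemma F_conj (M : ℕ) (c : ℤ → ℂ)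
    (hsupp : ∀ k : ℤ, k ∉ Finset.Icc (-(M : ℤ)) ((M : ℤ) - 1) → c k = 0)
    (hsym : ∀ k : ℤ, c (-k) = starRingEnd ℂ (c k)) (z : ℂ) :
    F M c ((starRingEnd ℂ) z) = (starRingEnd ℂ) (F M c z) := by
  have hS : ∀ w : ℂ, F M c w = ∑ k ∈ Finset.Icc (-(M : ℤ)) (M : ℤ),
      c k * Complex.exp (2 * (Real.pi : ℂ) * Complex.I * (k : ℂ) * w) := by
    intro w
    refine Finset.sum_subset (Finset.Icc_subset_Icc le_rfl (by omega)) ?_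
    intro k hk hk'
    rw [hsupp k hk', zero_mul]
  rw [hS, hS, map_sum]
  refine Finset.sum_nbij' (fun k => -k) (fun k => -k) ?_ ?_ ?_ ?_ ?_
  · intro k hk; simp at hk ⊢; omega
  · intro k hk; simp at hk ⊢; omega
  · intro k _; ring
  · intro k _; ring
  · intro k _
    rw [hsym k, map_mul, Complex.conj_conj, ← Complex.exp_conj]
    congr 1
    have : (starRingEnd ℂ) (2 * (Real.pi : ℂ) * Complex.I * ((-k : ℤ) : ℂ) * z)
        = 2 * (Real.pi : ℂ) * (-Complex.I) * ((-k : ℤ) : ℂ) * (starRingEnd ℂ) z := by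
      simp [map_mul, Complex.conj_I, Complex.conj_ofReal, map_ofNat]
    rw [this]; push_cast; ring

lemma g_hasDerivAt (M : ℕ) (c : ℤ → ℂ) (ρ : ℝ) (t : ℝ) :
    HasDerivAt (fun s : ℝ => F M c ((s : ℂ) + (ρ : ℂ) * Complex.I))
      (∑ k ∈ Finset.Icc (-(M : ℤ)) ((M : ℤ) - 1),
        c k * (2 * (Real.pi : ℂ) * Complex.I * (k : ℂ) *
          Complex.exp (2 * (Real.pi : ℂ) * Complex.I * (k : ℂ) *
            ((t : ℂ) + (ρ : ℂ) * Complex.I)))) t := by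
  apply HasDerivAt.fun_sum
  intro k _
  set A : ℂ := 2 * (Real.pi : ℂ) * Complex.I * (k : ℂ)
  have h1 : HasDerivAt (fun z : ℂ => c k * Complex.exp (A * (z + (ρ : ℂ) * Complex.I)))
      (c k * (A * Complex.exp (A * ((t : ℂ) + (ρ : ℂ) * Complex.I)))) (t : ℂ) := by
    have h2 : HasDerivAt (fun z : ℂ => A * (z + (ρ : ℂ) * Complex.I)) A (t : ℂ) := by
      simpa using ((hasDerivAt_id ((t : ℂ))).add_const ((ρ : ℂ) * Complex.I)).const_mul A
    have h4 := h2.cexp.const_mul (c k)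
    have h5 : c k * (A * Complex.exp (A * ((t : ℂ) + (ρ : ℂ) * Complex.I)))
        = c k * (Complex.exp (A * ((t : ℂ) + (ρ : ℂ) * Complex.I)) * A) := by ring
    rw [h5]; exact h4
  have := h1.comp_ofReal
  convert this using 2 <;> ring

lemma deriv_bound (M : ℕ) (c : ℤ → ℂ) (ρ : ℝ) (hρ : 0 ≤ ρ) (t : ℝ) :
    ‖∑ k ∈ Finset.Icc (-(M : ℤ)) ((M : ℤ) - 1),
        c k * (2 * (Real.pi : ℂ) * Complex.I * (k : ℂ) *
          Complex.exp (2 * (Real.pi : ℂ) * Complex.I * (k : ℂ) *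
            ((t : ℂ) + (ρ : ℂ) * Complex.I)))‖
      ≤ ∑ k ∈ Finset.Icc (-(M : ℤ)) ((M : ℤ) - 1),
          2 * Real.pi * |(k : ℝ)| * ‖c k‖ * Real.exp (2 * Real.pi * |(k : ℝ)| * ρ) := by
  refine (norm_sum_le _ _).trans (Finset.sum_le_sum fun k _ => ?_)
  rw [norm_mul, norm_mul]
  have hA : ‖2 * (Real.pi : ℂ) * Complex.I * (k : ℂ)‖ = 2 * Real.pi * |(k : ℝ)| := by
    rw [norm_mul, norm_mul, norm_mul, Complex.norm_I, Complex.norm_real, Real.norm_eq_abs, Complex.norm_intCast,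
      Complex.norm_two, _root_.abs_of_nonneg Real.pi_pos.le, mul_one]
  have him : |((t : ℂ) + (ρ : ℂ) * Complex.I).im| = ρ := by simp [_root_.abs_of_nonneg hρ]
  have hexp := abs_exp_le k ((t : ℂ) + (ρ : ℂ) * Complex.I) ρ (le_of_eq him)
  calc ‖c k‖ * (‖2 * (Real.pi : ℂ) * Complex.I * (k : ℂ)‖ *
        ‖Complex.exp (2 * (Real.pi : ℂ) * Complex.I * (k : ℂ) *
          ((t : ℂ) + (ρ : ℂ) * Complex.I))‖)
      ≤ ‖c k‖ * ((2 * Real.pi * |(k : ℝ)|) * Real.exp (2 * Real.pi * |(k : ℝ)| * ρ)) := by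
        rw [hA]
        apply mul_le_mul_of_nonneg_left _ (norm_nonneg _)
        exact mul_le_mul_of_nonneg_left hexp (by positivity)
    _ = 2 * Real.pi * |(k : ℝ)| * ‖c k‖ * Real.exp (2 * Real.pi * |(k : ℝ)| * ρ) := by
        ring

/-- Bound on the boundary line `Im = ρ`. -/
lemma line_bound (M : ℕ) (hM : 1 ≤ M) (c : ℤ → ℂ) (ρ : ℝ) (hρ : 0 ≤ ρ) (t : ℝ) :
    ‖F M c ((t : ℂ) + (ρ : ℂ) * Complex.I)‖ ≤
      (Finset.range (2 * M)).sup' (Finset.nonempty_range_iff.mpr (Nat.mul_ne_zero two_ne_zero (Nat.one_le_iff_ne_zero.mp hM)))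
          (fun j => ‖F M c ((j : ℂ) / ((2 * M : ℕ) : ℂ) + (ρ : ℂ) * Complex.I)‖) +
        (1 / (2 * ((2 * M : ℕ) : ℝ))) *
          ∑ k ∈ Finset.Icc (-(M : ℤ)) ((M : ℤ) - 1),
            2 * Real.pi * |(k : ℝ)| * ‖c k‖ * Real.exp (2 * Real.pi * |(k : ℝ)| * ρ) := by
  set N : ℕ := 2 * M with hN
  have hNpos : 0 < N := by omega
  have hNR : (0 : ℝ) < (N : ℝ) := by exact_mod_cast hNpos
  set D : ℝ := ∑ k ∈ Finset.Icc (-(M : ℤ)) ((M : ℤ) - 1),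
      2 * Real.pi * |(k : ℝ)| * ‖c k‖ * Real.exp (2 * Real.pi * |(k : ℝ)| * ρ) with hD
  have hDnonneg : 0 ≤ D := Finset.sum_nonneg fun k _ => by positivity
  set j0 : ℤ := round ((N : ℝ) * t) with hj0
  -- distance from t to the nearest grid point
  have hdist : |t - (j0 : ℝ) / (N : ℝ)| ≤ 1 / (2 * (N : ℝ)) := by
    have h1 : |(N : ℝ) * t - (j0 : ℝ)| ≤ 1 / 2 := abs_sub_round _
    have h2 : t - (j0 : ℝ) / (N : ℝ) = ((N : ℝ) * t - (j0 : ℝ)) / (N : ℝ) := by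
      field_simp
    rw [h2, abs_div, _root_.abs_of_pos hNR, div_le_div_iff₀ hNR (by positivity)]
    nlinarith
  -- mean value estimate
  have hMVT : ‖F M c ((t : ℂ) + (ρ : ℂ) * Complex.I)
        - F M c (((j0 : ℝ) / (N : ℝ) : ℝ) + (ρ : ℂ) * Complex.I)‖ ≤ D * (1 / (2 * (N : ℝ))) := by
    have hmvt := Convex.norm_image_sub_le_of_norm_hasDerivWithin_le
      (f := fun s : ℝ => F M c ((s : ℂ) + (ρ : ℂ) * Complex.I))
      (f' := fun s : ℝ => ∑ k ∈ Finset.Icc (-(M : ℤ)) ((M : ℤ) - 1),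
        c k * (2 * (Real.pi : ℂ) * Complex.I * (k : ℂ) *
          Complex.exp (2 * (Real.pi : ℂ) * Complex.I * (k : ℂ) *
            ((s : ℂ) + (ρ : ℂ) * Complex.I))))
      (s := Set.univ) (C := D)
      (fun s _ => (g_hasDerivAt M c ρ s).hasDerivWithinAt)
      (fun s _ => deriv_bound M c ρ hρ s) convex_univ (Set.mem_univ ((j0 : ℝ) / (N : ℝ)))
      (Set.mem_univ t)
    refine hmvt.trans ?_
    have : ‖t - (j0 : ℝ) / (N : ℝ)‖ = |t - (j0 : ℝ) / (N : ℝ)| := rfl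
    calc D * ‖t - (j0 : ℝ) / (N : ℝ)‖ ≤ D * (1 / (2 * (N : ℝ))) := by
          exact mul_le_mul_of_nonneg_left (this ▸ hdist) hDnonneg
      _ = D * (1 / (2 * (N : ℝ))) := rfl
  -- reduce the grid point mod N
  set j : ℕ := (j0 % (N : ℤ)).toNat with hj
  have hjlt : j < N := by
    have h1 : (0 : ℤ) ≤ j0 % (N : ℤ) := Int.emod_nonneg _ (by exact_mod_cast hNpos.ne')
    have h2 : j0 % (N : ℤ) < (N : ℤ) := Int.emod_lt_of_pos _ (by exact_mod_cast hNpos)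
    omega
  have hjc : ((j : ℕ) : ℂ) = ((j0 % (N : ℤ) : ℤ) : ℂ) := by
    have h1 : (0 : ℤ) ≤ j0 % (N : ℤ) := Int.emod_nonneg _ (by exact_mod_cast hNpos.ne')
    rw [hj]
    exact_mod_cast congrArg (fun n : ℤ => (n : ℂ)) (Int.toNat_of_nonneg h1)
  have hgrid : F M c (((j0 : ℝ) / (N : ℝ) : ℝ) + (ρ : ℂ) * Complex.I)
      = F M c ((j : ℂ) / ((N : ℕ) : ℂ) + (ρ : ℂ) * Complex.I) := by
    have hNC : ((N : ℕ) : ℂ) ≠ 0 := by exact_mod_cast hNpos.ne'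
    have hsplit : (((j0 : ℝ) / (N : ℝ) : ℝ) : ℂ) + (ρ : ℂ) * Complex.I
        = ((j : ℂ) / ((N : ℕ) : ℂ) + (ρ : ℂ) * Complex.I) + ((j0 / (N : ℤ) : ℤ) : ℂ) := by
      have hdecomp : (j0 : ℂ) = ((N : ℕ) : ℂ) * ((j0 / (N : ℤ) : ℤ) : ℂ) + ((j0 % (N : ℤ) : ℤ) : ℂ) := by
        push_cast
        exact_mod_cast congrArg (Int.cast : ℤ → ℂ) (Int.mul_ediv_add_emod j0 (N : ℤ)).symm
      push_cast
      rw [hjc]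
      field_simp
      push_cast at hdecomp
      linear_combination hdecomp
    rw [hsplit, F_periodic]
  have hgridle : ‖F M c ((j : ℂ) / ((N : ℕ) : ℂ) + (ρ : ℂ) * Complex.I)‖
      ≤ (Finset.range N).sup' (Finset.nonempty_range_iff.mpr hNpos.ne')
          (fun j => ‖F M c ((j : ℂ) / ((N : ℕ) : ℂ) + (ρ : ℂ) * Complex.I)‖) := by
    apply Finset.le_sup' (fun j : ℕ => ‖F M c ((j : ℂ) / ((N : ℕ) : ℂ) + (ρ : ℂ) * Complex.I)‖) (Finset.mem_range.mpr hjlt)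
  calc ‖F M c ((t : ℂ) + (ρ : ℂ) * Complex.I)‖
      ≤ ‖F M c (((j0 : ℝ) / (N : ℝ) : ℝ) + (ρ : ℂ) * Complex.I)‖
        + ‖F M c ((t : ℂ) + (ρ : ℂ) * Complex.I)
            - F M c (((j0 : ℝ) / (N : ℝ) : ℝ) + (ρ : ℂ) * Complex.I)‖ := by
        exact norm_le_insert' _ _
    _ ≤ (Finset.range N).sup' (Finset.nonempty_range_iff.mpr hNpos.ne')
          (fun j => ‖F M c ((j : ℂ) / ((N : ℕ) : ℂ) + (ρ : ℂ) * Complex.I)‖)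
        + (1 / (2 * ((N : ℕ) : ℝ))) * D := by
        apply add_le_add
        · rw [hgrid]; exact hgridle
        · linarith [hMVT]

lemma F_abs_le_strip (M : ℕ) (c : ℤ → ℂ) (ρ : ℝ) (z : ℂ) (hz : |z.im| ≤ ρ) :
    ‖F M c z‖ ≤ ∑ k ∈ Finset.Icc (-(M : ℤ)) ((M : ℤ) - 1),
      ‖c k‖ * Real.exp (2 * Real.pi * |(k : ℝ)| * ρ) := by
  refine (norm_sum_le _ _).trans (Finset.sum_le_sum fun k _ => ?_)
  rw [norm_mul]
  exact mul_le_mul_of_nonneg_left (abs_exp_le k z ρ hz) (norm_nonneg _)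

/-- Bound at every point of the closed strip. -/
lemma strip_bound (M : ℕ) (hM : 1 ≤ M) (c : ℤ → ℂ)
    (hsupp : ∀ k : ℤ, k ∉ Finset.Icc (-(M : ℤ)) ((M : ℤ) - 1) → c k = 0)
    (hsym : ∀ k : ℤ, c (-k) = starRingEnd ℂ (c k))
    (ρ : ℝ) (hρ : 0 ≤ ρ) (z : ℂ) (hz : |z.im| ≤ ρ) :
    ‖F M c z‖ ≤
      (Finset.range (2 * M)).sup' (Finset.nonempty_range_iff.mpr (Nat.mul_ne_zero two_ne_zero (Nat.one_le_iff_ne_zero.mp hM)))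
          (fun j => ‖F M c ((j : ℂ) / ((2 * M : ℕ) : ℂ) + (ρ : ℂ) * Complex.I)‖) +
        (1 / (2 * ((2 * M : ℕ) : ℝ))) *
          ∑ k ∈ Finset.Icc (-(M : ℤ)) ((M : ℤ) - 1),
            2 * Real.pi * |(k : ℝ)| * ‖c k‖ * Real.exp (2 * Real.pi * |(k : ℝ)| * ρ) := by
  set C : ℝ := (Finset.range (2 * M)).sup' (Finset.nonempty_range_iff.mpr (Nat.mul_ne_zero two_ne_zero (Nat.one_le_iff_ne_zero.mp hM)))
          (fun j => ‖F M c ((j : ℂ) / ((2 * M : ℕ) : ℂ) + (ρ : ℂ) * Complex.I)‖) +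
        (1 / (2 * ((2 * M : ℕ) : ℝ))) *
          ∑ k ∈ Finset.Icc (-(M : ℤ)) ((M : ℤ) - 1),
            2 * Real.pi * |(k : ℝ)| * ‖c k‖ * Real.exp (2 * Real.pi * |(k : ℝ)| * ρ)
      with hC
  have htop : ∀ w : ℂ, w.im = ρ → ‖F M c w‖ ≤ C := by
    intro w hw
    have hwrw : w = ((w.re : ℝ) : ℂ) + (ρ : ℂ) * Complex.I := by
      apply Complex.ext <;> simp [hw]
    rw [hwrw]
    exact line_bound M hM c ρ hρ w.re
  have hbot : ∀ w : ℂ, w.im = -ρ → ‖F M c w‖ ≤ C := by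
    intro w hw
    have h1 : ((starRingEnd ℂ) w).im = ρ := by simp [hw]
    have h2 : ‖F M c w‖ = ‖F M c ((starRingEnd ℂ) w)‖ := by
      rw [← Complex.conj_conj w, F_conj M c hsupp hsym, Complex.norm_conj, Complex.conj_conj]
    rw [h2]
    exact htop _ h1
  rcases eq_or_lt_of_le (abs_le.mp hz).2 with h | h
  · exact htop z h
  rcases eq_or_lt_of_le (abs_le.mp hz).1 with h' | h'
  · exact hbot z h'.symm
  have hρpos : 0 < ρ := lt_of_le_of_lt (abs_nonneg z.im) (abs_lt.mpr ⟨h', h⟩)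
  have hbig : (F M c) =O[Filter.comap (_root_.abs ∘ Complex.re) Filter.atTop ⊓
      Filter.principal (Complex.im ⁻¹' Set.Ioo (-ρ) ρ)]
      (fun w => Real.exp ((0 : ℝ) * Real.exp (0 * |w.re|))) := by
    rw [Asymptotics.isBigO_iff]
    refine ⟨∑ k ∈ Finset.Icc (-(M : ℤ)) ((M : ℤ) - 1),
      ‖c k‖ * Real.exp (2 * Real.pi * |(k : ℝ)| * ρ), ?_⟩
    rw [Filter.eventually_inf_principal]
    apply Filter.Eventually.of_forall
    intro w hw
    simp only [zero_mul, Real.exp_zero, norm_one, mul_one]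
    exact F_abs_le_strip M c ρ w (le_of_lt (abs_lt.mpr ⟨hw.1, hw.2⟩))
  have hPL := PhragmenLindelof.horizontal_strip (a := -ρ) (b := ρ) (f := F M c) (z := z)
    ((F_diff M c).diffContOnCl)
    ⟨0, by rw [sub_neg_eq_add]; exact div_pos Real.pi_pos (by linarith), 0, hbig⟩
    hbot htop (abs_le.mp hz).1 (abs_le.mp hz).2
  exact hPL

end TrigPolyAux

/-- Sup-norm bound for a real trigonometric polynomial of degree `< N = 2M` on the
closed strip of half-width `ρ`: the sup over the strip is bounded by the maximum of the
values at the `N` boundary grid points `j/N + iρ` plus `(1/(2N))·Σ_k 2π|k||F̂_k|e^{2π|k|ρ}`. -/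
theorem trig_poly_sup_bound (M : ℕ) (hM : 1 ≤ M) (c : ℤ → ℂ)
    (hsupp : ∀ k : ℤ, k ∉ Finset.Icc (-(M : ℤ)) ((M : ℤ) - 1) → c k = 0)
    (hzero : c (-(M : ℤ)) = 0)
    (hsym : ∀ k : ℤ, c (-k) = starRingEnd ℂ (c k)) :
    ∀ ρ : ℝ, 0 ≤ ρ →
      sSup ((fun x => ‖
          (∑ k ∈ Finset.Icc (-(M : ℤ)) ((M : ℤ) - 1),
            c k * Complex.exp (2 * (Real.pi : ℂ) * Complex.I * (k : ℂ) * x))‖) '' stripC ρ) ≤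
        (Finset.range (2 * M)).sup' (Finset.nonempty_range_iff.mpr (by omega))
            (fun j => ‖
              (∑ k ∈ Finset.Icc (-(M : ℤ)) ((M : ℤ) - 1),
                c k * Complex.exp (2 * (Real.pi : ℂ) * Complex.I * (k : ℂ) *
                  ((j : ℂ) / ((2 * M : ℕ) : ℂ) + (ρ : ℂ) * Complex.I)))‖) +
          (1 / (2 * ((2 * M : ℕ) : ℝ))) *
            ∑ k ∈ Finset.Icc (-(M : ℤ)) ((M : ℤ) - 1),
              2 * Real.pi * |(k : ℝ)| * ‖c k‖ * Real.exp (2 * Real.pi * |(k : ℝ)| * ρ) := by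
  intro ρ hρ
  have key : ∀ w ∈ stripC ρ, ‖TrigPolyAux.F M c w‖ ≤
      (Finset.range (2 * M)).sup' (Finset.nonempty_range_iff.mpr (by omega))
          (fun j => ‖TrigPolyAux.F M c
            ((j : ℂ) / ((2 * M : ℕ) : ℂ) + (ρ : ℂ) * Complex.I)‖) +
        (1 / (2 * ((2 * M : ℕ) : ℝ))) *
          ∑ k ∈ Finset.Icc (-(M : ℤ)) ((M : ℤ) - 1),
            2 * Real.pi * |(k : ℝ)| * ‖c k‖ *
              Real.exp (2 * Real.pi * |(k : ℝ)| * ρ) :=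
    fun w hw => TrigPolyAux.strip_bound M hM c hsupp hsym ρ hρ w hw
  apply Real.sSup_le
  · rintro x ⟨w, hw, rfl⟩
    exact key w hw
  · have h1 : (0 : ℝ) ≤ (Finset.range (2 * M)).sup'
        (Finset.nonempty_range_iff.mpr (by omega))
        (fun j => ‖TrigPolyAux.F M c
          ((j : ℂ) / ((2 * M : ℕ) : ℂ) + (ρ : ℂ) * Complex.I)‖) :=
      by
      refine le_trans (norm_nonneg (TrigPolyAux.F M c
        (((0 : ℕ) : ℂ) / ((2 * M : ℕ) : ℂ) + (ρ : ℂ) * Complex.I))) ?_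
      exact Finset.le_sup' (fun j : ℕ => ‖TrigPolyAux.F M c
        ((j : ℂ) / ((2 * M : ℕ) : ℂ) + (ρ : ℂ) * Complex.I)‖)
        (Finset.mem_range.mpr (show 0 < 2 * M by omega))
    have h2 : (0 : ℝ) ≤ (1 / (2 * ((2 * M : ℕ) : ℝ))) *
        ∑ k ∈ Finset.Icc (-(M : ℤ)) ((M : ℤ) - 1),
          2 * Real.pi * |(k : ℝ)| * ‖c k‖ *
            Real.exp (2 * Real.pi * |(k : ℝ)| * ρ) := by
      apply mul_nonneg (by positivity)
      exact Finset.sum_nonneg fun k _ => by positivity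
    exact add_nonneg h1 h2
end
end
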